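/- For real $t \ge 0$ and real exponent $p \ge 3$, one has $(1+t)^p \ge 1 + pt + pt^{p-1} + t^p$. -/

import Mathlib

open Real Set

private lemma lemA {x r : ℝ} (hx : 0 ≤ x) (hr : 1 ≤ r) :
    x ^ r + r * x ^ (r - 1) ≤ (1 + x) ^ r := by
  rcases hx.eq_or_lt with h0 | h0
  · subst h0
    rw [Real.zero_rpow (by linarith)]
    rcases hr.eq_or_lt with h1 | h1
    · rw [← h1]; norm_num
    · rw [Real.zero_rpow (by linarith)]; norm_num
  · have hb := one_add_mul_self_le_rpow_one_add (s := 1 / x)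
      (by have : (0:ℝ) ≤ 1 / x := by positivity
          linarith) hr
    have key : (1 + x) ^ r = x ^ r * (1 + 1 / x) ^ r := by
      rw [← Real.mul_rpow h0.le (by positivity)]
      congr 1
      field_simp
      ring
    rw [key]
    have h2 : x ^ r * (1 + r * (1 / x)) = x ^ r + r * x ^ (r - 1) := by
      have : x ^ (r - 1) = x ^ r / x := by
        rw [Real.rpow_sub h0, Real.rpow_one]
      rw [this]; field_simp
    calc x ^ r + r * x ^ (r - 1) = x ^ r * (1 + r * (1 / x)) := h2.symm
      _ ≤ x ^ r * (1 + 1 / x) ^ r := by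
          apply mul_le_mul_of_nonneg_left hb (by positivity)

private lemma lemB {t q : ℝ} (ht : 0 ≤ t) (hq : 2 ≤ q) :
    1 + q * t ^ (q - 1) + t ^ q ≤ (1 + t) ^ q := by
  set f : ℝ → ℝ := fun s => (1 + s) ^ q - s ^ q - q * s ^ (q - 1) - 1 with hf
  have hcont : ContinuousOn f (Ici 0) := by
    apply ContinuousOn.sub ?_ continuousOn_const
    apply ContinuousOn.sub ?_ ?_
    apply ContinuousOn.sub
    · exact ((continuous_const.add continuous_id).rpow_const
        (fun x => Or.inr (by linarith))).continuousOn
    · exact (continuous_id.rpow_const (fun x => Or.inr (by linarith))).continuousOn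
    · exact (continuous_const.mul (continuous_id.rpow_const
        (fun x => Or.inr (by linarith)))).continuousOn
  have hderiv : ∀ x ∈ Ioi (0:ℝ), HasDerivAt f
      (q * (1 + x) ^ (q - 1) - q * x ^ (q - 1) - q * ((q - 1) * x ^ (q - 1 - 1))) x := by
    intro x hx
    have hx' : (0:ℝ) < x := hx
    have d1 : HasDerivAt (fun s : ℝ => (1 + s) ^ q) (q * (1 + x) ^ (q - 1) * 1) x :=
      HasDerivAt.comp x (Real.hasDerivAt_rpow_const (Or.inl (by positivity)))
        ((hasDerivAt_id x).const_add 1)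
    have d2 : HasDerivAt (fun s : ℝ => s ^ q) (q * x ^ (q - 1)) x :=
      Real.hasDerivAt_rpow_const (Or.inl hx'.ne')
    have d3 : HasDerivAt (fun s : ℝ => q * s ^ (q - 1))
        (q * ((q - 1) * x ^ (q - 1 - 1))) x :=
      (Real.hasDerivAt_rpow_const (Or.inl hx'.ne')).const_mul q
    simpa [hf] using ((d1.sub d2).sub d3).sub_const 1
  have hmono : MonotoneOn f (Ici 0) := by
    apply monotoneOn_of_deriv_nonneg (convex_Ici 0) hcont
    · intro x hx
      rw [interior_Ici] at hx
      exact ((hderiv x hx).differentiableAt).differentiableWithinAt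
    · intro x hx
      rw [interior_Ici] at hx
      rw [(hderiv x hx).deriv]
      have hx' : (0:ℝ) < x := hx
      have hA := lemA (x := x) (r := q - 1) hx'.le (by linarith)
      nlinarith [hA, hq]
  have h0 : f 0 = 0 := by
    simp only [hf]
    rw [Real.zero_rpow (by linarith), Real.zero_rpow (by linarith)]
    norm_num
  have := hmono (self_mem_Ici) (mem_Ici.mpr ht) ht
  rw [h0] at this
  simp only [hf] at this
  linarith

/-- For real `t ≥ 0` and real exponent `p ≥ 3`, `(1+t)^p ≥ 1 + p t + p t^{p-1} + t^p`. -/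
theorem stmt2 (t p : ℝ) (ht : 0 ≤ t) (hp : 3 ≤ p) :
    (1 + t) ^ p ≥ 1 + p * t + p * t ^ (p - 1) + t ^ p := by
  set f : ℝ → ℝ := fun s => (1 + s) ^ p - s ^ p - p * s ^ (p - 1) - p * s - 1 with hf
  have hcont : ContinuousOn f (Ici 0) := by
    apply ContinuousOn.sub ?_ continuousOn_const
    apply ContinuousOn.sub ?_ (continuous_const.mul continuous_id).continuousOn
    apply ContinuousOn.sub ?_ (continuous_const.mul (continuous_id.rpow_const
        (fun x => Or.inr (by linarith)))).continuousOn
    apply ContinuousOn.sub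
    · exact ((continuous_const.add continuous_id).rpow_const
        (fun x => Or.inr (by linarith))).continuousOn
    · exact (continuous_id.rpow_const (fun x => Or.inr (by linarith))).continuousOn
  have hderiv : ∀ x ∈ Ioi (0:ℝ), HasDerivAt f
      (p * (1 + x) ^ (p - 1) - p * x ^ (p - 1) - p * ((p - 1) * x ^ (p - 1 - 1)) - p) x := by
    intro x hx
    have hx' : (0:ℝ) < x := hx
    have d1 : HasDerivAt (fun s : ℝ => (1 + s) ^ p) (p * (1 + x) ^ (p - 1) * 1) x :=
      HasDerivAt.comp x (Real.hasDerivAt_rpow_const (Or.inl (by positivity)))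
        ((hasDerivAt_id x).const_add 1)
    have d2 : HasDerivAt (fun s : ℝ => s ^ p) (p * x ^ (p - 1)) x :=
      Real.hasDerivAt_rpow_const (Or.inl hx'.ne')
    have d3 : HasDerivAt (fun s : ℝ => p * s ^ (p - 1))
        (p * ((p - 1) * x ^ (p - 1 - 1))) x :=
      (Real.hasDerivAt_rpow_const (Or.inl hx'.ne')).const_mul p
    have d4 : HasDerivAt (fun s : ℝ => p * s) p x := by
      simpa using (hasDerivAt_id x).const_mul p
    simpa [hf] using (((d1.sub d2).sub d3).sub d4).sub_const 1
  have hmono : MonotoneOn f (Ici 0) := by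
    apply monotoneOn_of_deriv_nonneg (convex_Ici 0) hcont
    · intro x hx
      rw [interior_Ici] at hx
      exact ((hderiv x hx).differentiableAt).differentiableWithinAt
    · intro x hx
      rw [interior_Ici] at hx
      rw [(hderiv x hx).deriv]
      have hx' : (0:ℝ) < x := hx
      have hB := lemB (t := x) (q := p - 1) hx'.le (by linarith)
      nlinarith [hB, hp]
  have h0 : f 0 = 0 := by
    simp only [hf]
    rw [Real.zero_rpow (by linarith), Real.zero_rpow (by linarith)]
    norm_num
  have := hmono (self_mem_Ici) (mem_Ici.mpr ht) ht
  rw [h0] at this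
  simp only [hf] at this
  linarith
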